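/- In sl(3), the 4-dimensional subalgebra g_{JE} spanned by {H^P, H₁₃^⊥, E₁₂, E₁₃} is a Frobenius Lie algebra: for nonzero scalars a, b, the functional f = a E₁₂* + b E₁₃* yields a nondegenerate form (x,y) ↦ f([x,y]) on g_{JE}. -/

import Mathlib

/- STATEMENT 16: In sl(3), the 4-dimensional subalgebra g_JE = span{H^P, H₁₃^⊥, E₁₂, E₁₃}
is Frobenius: for nonzero scalars a, b, the functional f = a E₁₂* + b E₁₃* yields a
nondegenerate form (x,y) ↦ f([x,y]) on g_JE.  Since H^P and H₁₃^⊥ are diagonal, the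
E₁₂*- and E₁₃*-coordinates of an element z of g_JE are its matrix entries z 0 1 and
z 0 2, so f(z) = a·z 0 1 + b·z 0 2.  (0-based matrix indices.) -/

open Matrix

noncomputable section

variable (K : Type) [Field K] [CharZero K]

def Esl3 (i j : Fin 3) : Matrix (Fin 3) (Fin 3) K := single i j 1

def HPsl3 : Matrix (Fin 3) (Fin 3) K :=
  (3 : K)⁻¹ • ((2 : K) • Esl3 K 0 0 - Esl3 K 1 1 - Esl3 K 2 2)

def H13perp : Matrix (Fin 3) (Fin 3) K :=
  (3 : K)⁻¹ • (Esl3 K 0 0 - (2 : K) • Esl3 K 1 1 + Esl3 K 2 2)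

def gJE : Submodule K (Matrix (Fin 3) (Fin 3) K) :=
  Submodule.span K {HPsl3 K, H13perp K, Esl3 K 0 1, Esl3 K 0 2}

theorem stmt16 (a b : K) (ha : a ≠ 0) (hb : b ≠ 0) :
    ∀ x ∈ gJE K, (∀ y ∈ gJE K, a * ⁅x, y⁆ 0 1 + b * ⁅x, y⁆ 0 2 = 0) → x = 0 := by
  have hstruct : ∀ z ∈ gJE K, z 1 0 = 0 ∧ z 1 2 = 0 ∧ z 2 0 = 0 ∧ z 2 1 = 0 ∧
      z 0 0 + z 1 1 + z 2 2 = 0 := by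
    intro z hz
    induction hz using Submodule.span_induction with
    | mem w hw =>
      simp only [Set.mem_insert_iff, Set.mem_singleton_iff] at hw
      rcases hw with h | h | h | h <;> subst h <;>
        norm_num [HPsl3, H13perp, Esl3, Matrix.single, Matrix.smul_apply,
          Matrix.sub_apply, Matrix.add_apply, Matrix.of_apply, Fin.ext_iff]
    | zero => norm_num
    | add u v hu hv ihu ihv =>
      obtain ⟨a1,a2,a3,a4,a5⟩ := ihu
      obtain ⟨b1,b2,b3,b4,b5⟩ := ihv
      refine ⟨?_, ?_, ?_, ?_, ?_⟩ <;> simp only [Matrix.add_apply, a1,a2,a3,a4,b1,b2,b3,b4] <;>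
        first | linear_combination a5 + b5 | norm_num
    | smul c u hu ihu =>
      obtain ⟨a1,a2,a3,a4,a5⟩ := ihu
      refine ⟨?_, ?_, ?_, ?_, ?_⟩ <;> simp only [Matrix.smul_apply, a1,a2,a3,a4, smul_eq_mul] <;>
        first | linear_combination c * a5 | norm_num
  intro x hx hform
  obtain ⟨h10, h12, h20, h21, htr⟩ := hstruct x hx
  have m1 : Esl3 K 0 1 ∈ gJE K := Submodule.subset_span (by simp)
  have m2 : Esl3 K 0 2 ∈ gJE K := Submodule.subset_span (by simp)
  have m3 : HPsl3 K ∈ gJE K := Submodule.subset_span (by simp)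
  have m4 : H13perp K ∈ gJE K := Submodule.subset_span (by simp)
  have h1 := hform _ m1
  have h2 := hform _ m2
  have h3 := hform _ m3
  have h4 := hform _ m4
  simp only [Ring.lie_def, Matrix.sub_apply, Matrix.mul_apply, Fin.sum_univ_three, Esl3,
    HPsl3, H13perp, Matrix.single, Matrix.smul_apply, Matrix.add_apply, Matrix.of_apply,
    smul_eq_mul] at h1 h2 h3 h4
  norm_num [Fin.ext_iff] at h1 h2 h3 h4
  have h3' : a * x 0 1 + b * x 0 2 = 0 := by linear_combination -h3
  have e01 : x 0 1 = 0 := by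
    have : a * x 0 1 = 0 := by linear_combination -h4
    exact (mul_eq_zero.mp this).resolve_left ha
  have e02 : x 0 2 = 0 := by
    have : b * x 0 2 = 0 := by linear_combination h3' - a * e01
    exact (mul_eq_zero.mp this).resolve_left hb
  have d1 : x 0 0 = x 1 1 := by
    have h : a * (x 0 0 - x 1 1) = 0 := by linear_combination h1 + b * h12
    have := (mul_eq_zero.mp h).resolve_left ha
    linear_combination this
  have d2 : x 0 0 = x 2 2 := by
    have h : b * (x 0 0 - x 2 2) = 0 := by linear_combination h2 + a * h21
    have := (mul_eq_zero.mp h).resolve_left hb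
    linear_combination this
  have e00 : x 0 0 = 0 := by
    have h3 : (3 : K) ≠ 0 := by norm_num
    have : (3 : K) * x 0 0 = 0 := by linear_combination htr + d1 + d2
    exact (mul_eq_zero.mp this).resolve_left h3
  have e11 : x 1 1 = 0 := by linear_combination e00 - d1
  have e22 : x 2 2 = 0 := by linear_combination e00 - d2
  ext i j
  fin_cases i <;> fin_cases j <;>
    simp only [Matrix.zero_apply] <;>
    first
      | exact e00 | exact e01 | exact e02 | exact h10 | exact h12 | exact h20 | exact h21
      | exact e11 | exact e22

end
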